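/- Every endomorphism φ of the finite relational structure A = (A; R) extends to an endomorphism φ̄ of the digraph D(A), defined on A by φ, on R by the coordinatewise application φ^{(k)}, and on internal path vertices via the unique path homomorphisms P_{(a,r)} → P_{(φ(a), φ^{(k)}(r))}. -/

import Mathlib

/-- The positions `i ∈ [k]` at which `a` equals the `i`-th entry of `r`. -/
def idxSet {A : Type} [DecidableEq A] {k : ℕ} (a : A) (r : Fin k → A) : Finset (Fin k) :=
  Finset.univ.filter (fun i => a = r i)

/-- Direction pattern of the oriented path `Q_I`: a single edge, then for each
`l ∈ [k]` a single edge (if `l ∈ I`) or a zigzag (otherwise), then a single edge. -/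
def qdirs {k : ℕ} (I : Finset (Fin k)) : List Bool :=
  [true] ++ ((List.finRange k).flatMap
    (fun l => if l ∈ I then [true] else [true, false, true])) ++ [true]

/-- Edge relation of the oriented path with direction pattern `ds`
(vertices are `0, 1, ..., ds.length`). -/
def pedge (ds : List Bool) (x y : ℕ) : Prop :=
  (y = x + 1 ∧ x < ds.length ∧ ds.getD x false = true) ∨
  (x = y + 1 ∧ y < ds.length ∧ ds.getD y false = false)

/-- Number of edges of the connecting path `P_(a,r) = Q_{idxSet a r}`. -/
def plen {A : Type} [DecidableEq A] {k : ℕ} (a : A) (r : Fin k → A) : ℕ :=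
  (qdirs (idxSet a r)).length

/-- Vertices of the digraph `D(A)` for the structure `(A; R)`. -/
inductive DVert {A : Type} [DecidableEq A] {k : ℕ} (R : Set (Fin k → A)) : Type where
  | base : A → DVert R
  | top : (r : Fin k → A) → r ∈ R → DVert R
  | inner : (a : A) → (r : Fin k → A) → r ∈ R → (j : ℕ) → 0 < j → j < plen a r → DVert R

/-- `isAt v a r x` : vertex `v` of `D(A)` sits at position `x` of the connecting path
`P_(a,r)`. -/
def isAt {A : Type} [DecidableEq A] {k : ℕ} {R : Set (Fin k → A)} :
    DVert R → A → (Fin k → A) → ℕ → Prop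
  | .base a', a, _, x => a' = a ∧ x = 0
  | .top r' _, a, r, x => r' = r ∧ x = plen a r
  | .inner a' r' _ j _ _, a, r, x => a' = a ∧ r' = r ∧ x = j

/-- The edge relation of the digraph `D(A)`. -/
def dedge {A : Type} [DecidableEq A] {k : ℕ} {R : Set (Fin k → A)}
    (u v : DVert R) : Prop :=
  ∃ a r, r ∈ R ∧ ∃ x y, isAt u a r x ∧ isAt v a r y ∧
    pedge (qdirs (idxSet a r)) x y

/-- Height of position `x` along a path with direction pattern `ds`. -/
def phgt (ds : List Bool) (x : ℕ) : ℤ :=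
  ((ds.take x).count true : ℤ) - ((ds.take x).count false : ℤ)

/-- The level function of the balanced digraph `D(A)`. -/
def lvlD {A : Type} [DecidableEq A] {k : ℕ} {R : Set (Fin k → A)} : DVert R → ℕ
  | .base _ => 0
  | .top _ _ => k + 2
  | .inner a r _ j _ _ => (phgt (qdirs (idxSet a r)) j).toNat

/-- `walkAlong ds u v` : one can walk in `D(A)` from `u` to `v` following the
oriented path with direction pattern `ds` (i.e. there is a homomorphism of the path
into `D(A)` sending the initial vertex to `u` and the terminal vertex to `v`). -/
def walkAlong {A : Type} [DecidableEq A] {k : ℕ} {R : Set (Fin k → A)}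
    (ds : List Bool) (u v : DVert R) : Prop :=
  ∃ φ : ℕ → DVert R, φ 0 = u ∧ φ ds.length = v ∧
    ∀ x < ds.length,
      (ds.getD x false = true → dedge (φ x) (φ (x + 1))) ∧
      (ds.getD x false = false → dedge (φ (x + 1)) (φ x))

lemma phgt_zero (ds : List Bool) : phgt ds 0 = 0 := by simp [phgt]

lemma phgt_append_left (d1 d2 : List Bool) {x : ℕ} (h : x ≤ d1.length) :
    phgt (d1 ++ d2) x = phgt d1 x := by
  simp [phgt, List.take_append_of_le_length h]

lemma phgt_append_right (d1 d2 : List Bool) (t : ℕ) :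
    phgt (d1 ++ d2) (d1.length + t) = phgt d1 d1.length + phgt d2 t := by
  simp [phgt, List.take_append, List.take_length, List.count_append,
    List.take_of_length_le (Nat.le_add_right d1.length t)]
  ring

lemma phgt_stable (ds : List Bool) {x : ℕ} (h : ds.length ≤ x) :
    phgt ds x = phgt ds ds.length := by
  simp [phgt, List.take_of_length_le h, List.take_length]

lemma pedge_append_left {d1 d2 : List Bool} {x y : ℕ} (h : pedge d1 x y) :
    pedge (d1 ++ d2) x y := by
  rcases h with ⟨rfl, hx, hd⟩ | ⟨rfl, hy, hd⟩
  · exact Or.inl ⟨rfl, by simp; omega, by rw [List.getD_append _ _ _ _ hx]; exact hd⟩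
  · exact Or.inr ⟨rfl, by simp; omega, by rw [List.getD_append _ _ _ _ hy]; exact hd⟩

lemma pedge_append_right {d1 d2 : List Bool} {u v : ℕ} (h : pedge d2 u v) :
    pedge (d1 ++ d2) (d1.length + u) (d1.length + v) := by
  rcases h with ⟨rfl, hx, hd⟩ | ⟨rfl, hy, hd⟩
  · refine Or.inl ⟨by ring, by simp; omega, ?_⟩
    rw [List.getD_append_right _ _ _ _ (by omega)]; simpa using hd
  · refine Or.inr ⟨by ring, by simp; omega, ?_⟩
    rw [List.getD_append_right _ _ _ _ (by omega)]; simpa using hd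

structure PH (ds ds' : List Bool) (f : ℕ → ℕ) : Prop where
  h0 : f 0 = 0
  hL : f ds.length = ds'.length
  hbd : ∀ x ≤ ds.length, f x ≤ ds'.length
  hh : ∀ x ≤ ds.length, phgt ds' (f x) = phgt ds x
  he : ∀ x y, pedge ds x y → pedge ds' (f x) (f y)

lemma PH_id (ds : List Bool) : PH ds ds id :=
  ⟨rfl, rfl, fun _ h => h, fun _ _ => rfl, fun _ _ h => h⟩

lemma PH_zig : PH [true, false, true] [true] (· % 2) := by
  refine ⟨rfl, rfl, ?_, ?_, ?_⟩
  · intro x _; exact Nat.le_of_lt_succ (Nat.mod_lt _ (by norm_num))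
  · intro x hx
    simp only [List.length_cons, List.length_nil] at hx
    interval_cases x <;> decide
  · intro x y h
    rcases h with ⟨rfl, hx, hd⟩ | ⟨rfl, hy, hd⟩
    · simp only [List.length] at hx
      interval_cases x
      · exact Or.inl ⟨rfl, by norm_num, rfl⟩
      · exact absurd hd (by decide)
      · exact Or.inl ⟨rfl, by norm_num, rfl⟩
    · simp only [List.length] at hy
      interval_cases y
      · exact absurd hd (by decide)
      · exact Or.inl ⟨rfl, by norm_num, rfl⟩
      · exact absurd hd (by decide)

lemma PH_append {d1 d1' d2 d2' : List Bool} {f g : ℕ → ℕ}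
    (hf : PH d1 d1' f) (hg : PH d2 d2' g) :
    PH (d1 ++ d2) (d1' ++ d2')
      (fun x => if x ≤ d1.length then f x else d1'.length + g (x - d1.length)) := by
  have g0 : g 0 = 0 := hg.h0
  constructor
  · simp [hf.h0]
  · simp only [List.length_append]
    by_cases h2 : d2.length = 0
    · have : g 0 = d2'.length := by rw [← h2]; exact hg.hL
      simp [h2, hf.hL, ← this, g0]
    · rw [if_neg (by omega)]
      have : d1.length + d2.length - d1.length = d2.length := by omega
      rw [this, hg.hL]
  · intro x hx
    simp only [List.length_append] at hx ⊢
    by_cases h : x ≤ d1.length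
    · rw [if_pos h]; have := hf.hbd x h; omega
    · rw [if_neg h]; have := hg.hbd (x - d1.length) (by omega); omega
  · intro x hx
    simp only [List.length_append] at hx
    by_cases h : x ≤ d1.length
    · rw [if_pos h, phgt_append_left _ _ h, phgt_append_left _ _ (hf.hbd x h), hf.hh x h]
    · rw [if_neg h]
      have hx2 : x - d1.length ≤ d2.length := by omega
      have e1 : x = d1.length + (x - d1.length) := by omega
      rw [phgt_append_right, hg.hh _ hx2]
      conv_rhs => rw [e1]
      rw [phgt_append_right]
      have h1 : phgt d1' d1'.length = phgt d1 d1.length := by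
        rw [← hf.hL, hf.hh _ le_rfl]
      rw [h1]
  · intro x y hxy
    have key : ∀ z ≤ d1.length,
        (if z ≤ d1.length then f z else d1'.length + g (z - d1.length)) = f z :=
      fun z hz => if_pos hz
    have key2 : ∀ z, d1.length ≤ z →
        (if z ≤ d1.length then f z else d1'.length + g (z - d1.length))
          = d1'.length + g (z - d1.length) := by
      intro z hz
      by_cases h : z ≤ d1.length
      · have : z = d1.length := le_antisymm h hz
        subst this
        simp [hf.hL, g0]
      · exact if_neg h
    rcases hxy with ⟨rfl, hx, hd⟩ | ⟨rfl, hy, hd⟩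
    · simp only [List.length_append] at hx
      by_cases h : x < d1.length
      · have hd1 : d1.getD x false = true := by
          rwa [List.getD_append _ _ _ _ h] at hd
        rw [key x (le_of_lt h), key (x+1) h]
        exact pedge_append_left (hf.he x (x+1) (Or.inl ⟨rfl, h, hd1⟩))
      · have hd2 : d2.getD (x - d1.length) false = true := by
          rw [List.getD_append_right _ _ _ _ (by omega)] at hd; exact hd
        rw [key2 x (by omega), key2 (x+1) (by omega)]
        have e : x + 1 - d1.length = (x - d1.length) + 1 := by omega
        rw [e]
        exact pedge_append_right (hg.he _ _ (Or.inl ⟨rfl, by omega, hd2⟩))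
    · simp only [List.length_append] at hy
      by_cases h : y < d1.length
      · have hd1 : d1.getD y false = false := by
          rwa [List.getD_append _ _ _ _ h] at hd
        rw [key y (le_of_lt h), key (y+1) h]
        exact pedge_append_left (hf.he (y+1) y (Or.inr ⟨rfl, h, hd1⟩))
      · have hd2 : d2.getD (y - d1.length) false = false := by
          rw [List.getD_append_right _ _ _ _ (by omega)] at hd; exact hd
        rw [key2 y (by omega), key2 (y+1) (by omega)]
        have e : y + 1 - d1.length = (y - d1.length) + 1 := by omega
        rw [e]
        exact pedge_append_right (hg.he _ _ (Or.inr ⟨rfl, by omega, hd2⟩))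

lemma PH_flat (pr : List (List Bool × List Bool))
    (h : ∀ p ∈ pr, ∃ f, PH p.1 p.2 f) :
    ∃ F, PH (pr.flatMap Prod.fst) (pr.flatMap Prod.snd) F := by
  induction pr with
  | nil => exact ⟨id, by simpa using PH_id []⟩
  | cons p t ih =>
    obtain ⟨f, hf⟩ := h p (by simp)
    obtain ⟨F, hF⟩ := ih (fun q hq => h q (by simp [hq]))
    refine ⟨fun x => if x ≤ p.1.length then f x
      else p.2.length + F (x - p.1.length), ?_⟩
    simp only [List.flatMap_cons]
    exact PH_append hf hF

lemma phgt_flat_bounds (bs : List (List Bool))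
    (hbs : ∀ b ∈ bs, b = [true] ∨ b = [true, false, true]) :
    (∀ t ≤ (bs.flatMap id).length,
      0 ≤ phgt (bs.flatMap id) t ∧ phgt (bs.flatMap id) t ≤ bs.length) ∧
    phgt (bs.flatMap id) (bs.flatMap id).length = bs.length := by
  induction bs with
  | nil =>
    constructor
    · intro t ht
      simp only [List.flatMap_nil, List.length_nil, Nat.le_zero] at ht
      subst ht
      simp [phgt]
    · simp [phgt]
  | cons b rest ih =>
    obtain ⟨ihb, ihe⟩ := ih (fun q hq => hbs q (by simp [hq]))
    have hb := hbs b (by simp)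
    have hb1 : phgt b b.length = 1 := by rcases hb with rfl | rfl <;> decide
    have hbsmall : ∀ t ≤ b.length, 0 ≤ phgt b t ∧ phgt b t ≤ 1 := by
      intro t ht
      rcases hb with rfl | rfl <;>
        (simp only [List.length_cons, List.length_nil] at ht; interval_cases t <;> exact by decide)
    have hsplit : (b :: rest).flatMap id = b ++ rest.flatMap id := by simp
    constructor
    · intro t ht
      rw [hsplit] at ht ⊢
      simp only [List.length_append] at ht
      by_cases h : t ≤ b.length
      · rw [phgt_append_left _ _ h]
        have := hbsmall t h
        simp only [List.length_cons]
        constructor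
        · exact this.1
        · have : phgt b t ≤ 1 := this.2; push_cast; omega
      · have e : t = b.length + (t - b.length) := by omega
        rw [e, phgt_append_right, hb1]
        have := ihb (t - b.length) (by omega)
        simp only [List.length_cons]
        push_cast
        omega
    · rw [hsplit]
      simp only [List.length_append]
      rw [phgt_append_right, hb1, ihe]
      simp only [List.length_cons]
      push_cast
      ring

lemma qdirs_eq {k : ℕ} (I : Finset (Fin k)) :
    qdirs I = ([true] ++ ((List.finRange k).flatMap
      (fun l => if l ∈ I then [true] else [true, false, true]))) ++ [true] := by
  simp [qdirs, List.append_assoc]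

lemma phgt_qblock {k : ℕ} (I : Finset (Fin k)) :
    (∀ t ≤ ((List.finRange k).flatMap
        (fun l => if l ∈ I then [true] else [true, false, true])).length,
      0 ≤ phgt ((List.finRange k).flatMap
        (fun l => if l ∈ I then [true] else [true, false, true])) t ∧
      phgt ((List.finRange k).flatMap
        (fun l => if l ∈ I then [true] else [true, false, true])) t ≤ k) ∧
    phgt ((List.finRange k).flatMap
        (fun l => if l ∈ I then [true] else [true, false, true]))
      ((List.finRange k).flatMap
        (fun l => if l ∈ I then [true] else [true, false, true])).length = k := by
  have h := phgt_flat_bounds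
    (((List.finRange k)).map (fun l => if l ∈ I then [true] else [true, false, true]))
    (by intro b hb; simp only [List.mem_map] at hb; obtain ⟨l, _, rfl⟩ := hb
        by_cases hl : l ∈ I <;> simp [hl])
  rw [List.flatMap_map] at h
  simpa using h

lemma phgt_qdirs_internal {k : ℕ} (I : Finset (Fin k)) {x : ℕ}
    (hx1 : 0 < x) (hx2 : x < (qdirs I).length) :
    1 ≤ phgt (qdirs I) x ∧ phgt (qdirs I) x ≤ (k : ℤ) + 1 := by
  obtain ⟨hB, -⟩ := phgt_qblock I
  rw [qdirs_eq] at hx2 ⊢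
  set B := (List.finRange k).flatMap
      (fun l => if l ∈ I then [true] else [true, false, true]) with hBdef
  simp only [List.length_append, List.length_cons, List.length_nil] at hx2
  have hxle : x ≤ ([true] ++ B).length := by simp; omega
  rw [phgt_append_left _ _ hxle]
  have e : x = [true].length + (x - 1) := by simp; omega
  rw [e, phgt_append_right]
  have h1 : phgt [true] [true].length = 1 := by decide
  rw [h1]
  have := hB (x - 1) (by omega)
  omega

lemma phgt_qdirs_top {k : ℕ} (I : Finset (Fin k)) {x : ℕ}
    (hx : (qdirs I).length ≤ x) :
    phgt (qdirs I) x = (k : ℤ) + 2 := by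
  obtain ⟨-, hBe⟩ := phgt_qblock I
  rw [phgt_stable _ hx, qdirs_eq]
  set B := (List.finRange k).flatMap
      (fun l => if l ∈ I then [true] else [true, false, true]) with hBdef
  have e : (([true] ++ B) ++ [true]).length = ([true] ++ B).length + 1 := by
    rw [List.length_append]; simp
  rw [e, phgt_append_right]
  have e2 : ([true] ++ B).length = [true].length + B.length := by
    rw [List.length_append]
  rw [e2, phgt_append_right]
  have h1 : phgt [true] [true].length = 1 := by decide
  have h2 : phgt [true] 1 = 1 := by decide
  rw [h1, h2, hBe]
  ring

lemma PH_qdirs {k : ℕ} {I I' : Finset (Fin k)} (h : I ⊆ I') :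
    ∃ f, PH (qdirs I) (qdirs I') f := by
  obtain ⟨F, hF⟩ := PH_flat
    ((List.finRange k).map (fun l =>
      ((if l ∈ I then [true] else [true, false, true]),
       (if l ∈ I' then [true] else [true, false, true]))))
    (by
      intro p hp
      simp only [List.mem_map] at hp
      obtain ⟨l, _, rfl⟩ := hp
      by_cases hl : l ∈ I
      · have hl' : l ∈ I' := h hl
        simp only [hl, hl', if_true]
        exact ⟨id, PH_id _⟩
      · by_cases hl' : l ∈ I'
        · simp only [hl, hl', if_true, if_false]
          exact ⟨_, PH_zig⟩
        · simp only [hl, hl', if_false]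
          exact ⟨id, PH_id _⟩)
  rw [List.flatMap_map, List.flatMap_map] at hF
  simp only at hF
  have h2 := PH_append (PH_append (PH_id [true]) hF) (PH_id [true])
  rw [← qdirs_eq, ← qdirs_eq] at h2
  exact ⟨_, h2⟩

lemma idxSet_subset {A : Type} [DecidableEq A] {k : ℕ} (φ : A → A) (a : A) (r : Fin k → A) :
    idxSet a r ⊆ idxSet (φ a) (fun i => φ (r i)) := by
  intro l hl
  simp only [idxSet, Finset.mem_filter, Finset.mem_univ, true_and] at hl ⊢
  exact congrArg φ hl


/-- Every endomorphism `φ` of `(A; R)` extends to an endomorphism `Φ` of `D(A)`: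
`Φ` acts as `φ` on `A`, as the coordinatewise application `φ^(k)` on `R`, and maps
each internal vertex of `P_(a,r)` to the corresponding (level-preserving) vertex of
the path `P_(φ(a), φ^(k)(r))` under the unique path homomorphism. -/
theorem endomorphism_extends_to_D {A : Type} [DecidableEq A] {k : ℕ}
    (R : Set (Fin k → A)) (φ : A → A)
    (hφ : ∀ r ∈ R, (fun i => φ (r i)) ∈ R) :
    ∃ Φ : DVert R → DVert R,
      (∀ u v, dedge u v → dedge (Φ u) (Φ v)) ∧
      (∀ a, Φ (DVert.base a) = DVert.base (φ a)) ∧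
      (∀ r hr, Φ (DVert.top r hr) = DVert.top (fun i => φ (r i)) (hφ r hr)) ∧
      (∀ a r hr j h1 h2, ∃ x,
        isAt (Φ (DVert.inner a r hr j h1 h2)) (φ a) (fun i => φ (r i)) x ∧
        phgt (qdirs (idxSet (φ a) (fun i => φ (r i)))) x =
          phgt (qdirs (idxSet a r)) j) := by
  classical
  have key : ∀ (a : A) (r : Fin k → A), ∃ f : ℕ → ℕ,
      PH (qdirs (idxSet a r)) (qdirs (idxSet (φ a) (fun i => φ (r i)))) f ∧
      ∀ j, 0 < j → j < plen a r → 0 < f j ∧ f j < plen (φ a) (fun i => φ (r i)) := by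
    intro a r
    obtain ⟨f, hf⟩ := PH_qdirs (idxSet_subset φ a r)
    refine ⟨f, hf, ?_⟩
    intro j hj1 hj2
    have hrng := phgt_qdirs_internal (idxSet a r) hj1 (by exact hj2)
    have hhj : phgt (qdirs (idxSet (φ a) (fun i => φ (r i)))) (f j)
        = phgt (qdirs (idxSet a r)) j := hf.hh j (le_of_lt hj2)
    constructor
    · rcases Nat.eq_zero_or_pos (f j) with h0 | h0
      · exfalso
        rw [h0, phgt_zero] at hhj
        omega
      · exact h0
    · by_contra hge
      push_neg at hge
      have := phgt_qdirs_top (idxSet (φ a) (fun i => φ (r i))) hge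
      rw [this] at hhj
      omega
  choose f hPH hint using key
  refine ⟨fun u => match u with
    | .base a => .base (φ a)
    | .top r hr => .top (fun i => φ (r i)) (hφ r hr)
    | .inner a r hr j h1 h2 => .inner (φ a) (fun i => φ (r i)) (hφ r hr)
        (f a r j) (hint a r j h1 h2).1 (hint a r j h1 h2).2,
    ?_, fun a => rfl, fun r hr => rfl, ?_⟩
  · rintro u v ⟨a, r, hrR, x, y, hu, hv, hp⟩
    refine ⟨φ a, fun i => φ (r i), hφ r hrR, f a r x, f a r y, ?_, ?_,
      (hPH a r).he x y hp⟩
    · cases u with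
      | base a0 =>
        obtain ⟨rfl, rfl⟩ := hu
        exact ⟨rfl, (hPH a0 r).h0⟩
      | top r0 h0 =>
        obtain ⟨rfl, rfl⟩ := hu
        exact ⟨rfl, (hPH a r0).hL⟩
      | inner a0 r0 h0 j hj1 hj2 =>
        obtain ⟨rfl, rfl, rfl⟩ := hu
        exact ⟨rfl, rfl, rfl⟩
    · cases v with
      | base a0 =>
        obtain ⟨rfl, rfl⟩ := hv
        exact ⟨rfl, (hPH a0 r).h0⟩
      | top r0 h0 =>
        obtain ⟨rfl, rfl⟩ := hv
        exact ⟨rfl, (hPH a r0).hL⟩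
      | inner a0 r0 h0 j hj1 hj2 =>
        obtain ⟨rfl, rfl, rfl⟩ := hv
        exact ⟨rfl, rfl, rfl⟩
  · intro a r hr j h1 h2
    exact ⟨f a r j, ⟨rfl, rfl, rfl⟩, (hPH a r).hh j (le_of_lt h2)⟩
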